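/- arXiv:2311.11573 — 2 statements merged into one kernel-verified Lean document; each statement's English description precedes it below -/
import Mathlib

section
/- For all ν>0, S>0, and 0<κ<1, the quantity τ₋₊ := -λ₋ + μ₊ - 1/(ν²Sκ) is positive, where λ₋ = -1/(2ν²S) - sqrt(1/(2ν²S)² + 1/ν²) and μ₊ = (1-κ)/(2ν²Sκ) + sqrt(((1-κ)/(2ν²Sκ))² + 1/ν²). -/
theorem tau_mp_pos (ν S κ : ℝ) (hν : 0 < ν) (hS : 0 < S) (hκ0 : 0 < κ) (hκ1 : κ < 1) :
    0 < -(-1/(2*ν^2*S) - Real.sqrt ((1/(2*ν^2*S))^2 + 1/ν^2))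
      + ((1-κ)/(2*ν^2*S*κ) + Real.sqrt (((1-κ)/(2*ν^2*S*κ))^2 + 1/ν^2))
      - 1/(ν^2*S*κ) := by
  have hκ' : 0 < 1 - κ := by linarith
  have ha : (0:ℝ) ≤ 1/(2*ν^2*S) := by positivity
  have hb : (0:ℝ) ≤ (1-κ)/(2*ν^2*S*κ) := by positivity
  have hc : (0:ℝ) < 1/ν^2 := by positivity
  have h1 : 1/(2*ν^2*S) < Real.sqrt ((1/(2*ν^2*S))^2 + 1/ν^2) := by
    rw [Real.lt_sqrt ha]; linarith
  have h2 : (1-κ)/(2*ν^2*S*κ) < Real.sqrt (((1-κ)/(2*ν^2*S*κ))^2 + 1/ν^2) := by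
    rw [Real.lt_sqrt hb]; linarith
  have key : 1/(ν^2*S*κ) = 2*(1/(2*ν^2*S)) + 2*((1-κ)/(2*ν^2*S*κ)) := by
    field_simp; ring
  have hneg : -1/(2*ν^2*S) = -(1/(2*ν^2*S)) := by ring
  linarith
end

section
/- For all ν>0, S>0, and 0<κ<1, the quantity τ₊₊ := -λ₊ + μ₊ - 1/(ν²Sκ) is negative, where λ₊ = -1/(2ν²S) + sqrt(1/(2ν²S)² + 1/ν²) and μ₊ = (1-κ)/(2ν²Sκ) + sqrt(((1-κ)/(2ν²Sκ))² + 1/ν²). -/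
theorem tau_pp_neg (ν S κ : ℝ) (hν : 0 < ν) (hS : 0 < S) (hκ0 : 0 < κ) (hκ1 : κ < 1) :
    -(-1/(2*ν^2*S) + Real.sqrt ((1/(2*ν^2*S))^2 + 1/ν^2))
      + ((1-κ)/(2*ν^2*S*κ) + Real.sqrt (((1-κ)/(2*ν^2*S*κ))^2 + 1/ν^2))
      - 1/(ν^2*S*κ) < 0 := by
  set a : ℝ := 1/(2*ν^2*S) with ha_def
  set b : ℝ := (1-κ)/(2*ν^2*S*κ) with hb_def
  set c : ℝ := 1/ν^2 with hc_def
  have hν2 : (0:ℝ) < ν^2 := by positivity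
  have ha : 0 < a := by rw [ha_def]; positivity
  have hb : 0 < b := by rw [hb_def]; exact div_pos (by linarith) (by positivity)
  have hc : 0 < c := by rw [hc_def]; positivity
  have hkey : 1/(ν^2*S*κ) = 2*(a+b) := by
    rw [ha_def, hb_def]; field_simp; ring
  set s1 : ℝ := Real.sqrt (a^2 + c) with hs1_def
  set s2 : ℝ := Real.sqrt (b^2 + c) with hs2_def
  have hs1sq : s1^2 = a^2 + c := Real.sq_sqrt (by positivity)
  have hs2sq : s2^2 = b^2 + c := Real.sq_sqrt (by positivity)
  have hs1nn : 0 ≤ s1 := Real.sqrt_nonneg _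
  have hs2nn : 0 ≤ s2 := Real.sqrt_nonneg _
  have hlt : s2 < s1 + a + b := by
    nlinarith [sq_nonneg (s1 + a + b - s2), sq_nonneg (s1 + s2), mul_pos ha hb,
      mul_nonneg hs1nn (le_of_lt (add_pos ha hb))]
  have hna : -1/(2*ν^2*S) = -a := by rw [ha_def]; ring
  rw [hkey, hna]
  linarith
end
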